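/- Let a₁, a₂ be integers with 2 ≤ a₁ < a₂, and set Ω(a₁,a₂) := H(a₁,a₂)⁻¹ · G(a₁ - 2) in the Artin braid group B_{a₂}. Then: if a₁ is odd, Ω(a₁,a₂)⁻¹ · e(a₂)·o(a₂) · Ω(a₁,a₂) = W(a₁)·W(a₂)·W(a₁)⁻¹; and if a₁ is even, Ω(a₁,a₂)⁻¹ · o(a₂)·e(a₂) · Ω(a₁,a₂) = W(a₁)·W(a₂)·W(a₁)⁻¹. -/

import Mathlib

/-- The braid relations for the Artin braid group `B_n`, as a set of elements
of the free group on generators `σ_1, …, σ_{n-1}` (indexed by `Fin (n-1)`,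
where the index `i : Fin (n-1)` corresponds to the generator `σ_{i+1}`). -/
def braidRels (n : ℕ) : Set (FreeGroup (Fin (n - 1))) :=
  {r | ∃ i j : Fin (n - 1), (j : ℕ) = (i : ℕ) + 1 ∧
      r = FreeGroup.of i * FreeGroup.of j * FreeGroup.of i *
          (FreeGroup.of j * FreeGroup.of i * FreeGroup.of j)⁻¹} ∪
  {r | ∃ i j : Fin (n - 1), (i : ℕ) + 2 ≤ (j : ℕ) ∧
      r = FreeGroup.of i * FreeGroup.of j * (FreeGroup.of j * FreeGroup.of i)⁻¹}

/-- The Artin braid group `B_n`. -/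
abbrev BraidGroup (n : ℕ) := PresentedGroup (braidRels n)

/-- The generator `σ_i` of `B_n`, for `1 ≤ i ≤ n - 1` (junk value `1` otherwise). -/
def σ (n i : ℕ) : BraidGroup n :=
  if h : 1 ≤ i ∧ i ≤ n - 1 then PresentedGroup.of (⟨i - 1, by omega⟩ : Fin (n - 1)) else 1

/-- `W n m` is the element `W(m) = σ_{m-1} σ_{m-2} ⋯ σ_1` of `B_n`, with `W(1) = 1`. -/
def W (n : ℕ) : ℕ → BraidGroup n
  | 0 => 1
  | m + 1 => σ n m * W n m

/-- `eB m k` is the product `e(k)` of the generators `σ_i` of `B_m` over even `i`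
with `2 ≤ i < k` (the factors commute, so the order is irrelevant; note `σ m 0 = 1`). -/
def eB (m k : ℕ) : BraidGroup m :=
  (((List.range k).filter (fun i => i % 2 = 0)).map (σ m)).prod

/-- `oB m k` is the product `o(k)` of the generators `σ_i` of `B_m` over odd `i`
with `1 ≤ i < k` (the factors commute, so the order is irrelevant). -/
def oB (m k : ℕ) : BraidGroup m :=
  (((List.range k).filter (fun i => i % 2 = 1)).map (σ m)).prod

/-- The elements `G(k)` of `B_m`: `G(0) = G(1) = 1`, and for `k ≥ 2`,
`G(k) = e(k+1) o(k) G(k-2)` if `k` is odd, `G(k) = o(k+1) e(k) G(k-2)` if `k` is even. -/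
def G (m : ℕ) : ℕ → BraidGroup m
  | 0 => 1
  | 1 => 1
  | k + 2 => if (k + 2) % 2 = 1 then eB m (k + 3) * oB m (k + 2) * G m k
             else oB m (k + 3) * eB m (k + 2) * G m k

namespace Braid
variable {n : ℕ}

lemma rel_one {r : FreeGroup (Fin (n-1))} (h : r ∈ braidRels n) :
    PresentedGroup.mk (braidRels n) r = 1 :=
  (QuotientGroup.eq_one_iff r).mpr (Subgroup.subset_normalClosure h)

lemma σ_out {i : ℕ} (h : ¬(1 ≤ i ∧ i ≤ n - 1)) : σ n i = 1 := dif_neg h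

lemma σ_braid {i : ℕ} (h1 : 1 ≤ i) (h2 : i + 1 ≤ n - 1) :
    σ n i * σ n (i+1) * σ n i = σ n (i+1) * σ n i * σ n (i+1) := by
  have hi : 1 ≤ i ∧ i ≤ n - 1 := ⟨h1, by omega⟩
  have hj : 1 ≤ i + 1 ∧ i + 1 ≤ n - 1 := ⟨by omega, h2⟩
  rw [σ, σ, dif_pos hi, dif_pos hj]
  set a : Fin (n-1) := ⟨i - 1, by omega⟩
  set b : Fin (n-1) := ⟨i + 1 - 1, by omega⟩
  have hr : (FreeGroup.of a * FreeGroup.of b * FreeGroup.of a *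
      (FreeGroup.of b * FreeGroup.of a * FreeGroup.of b)⁻¹) ∈ braidRels n := by
    left
    exact ⟨a, b, by simp [a, b]; omega, rfl⟩
  have := rel_one hr
  have h2 := congrArg (· * (PresentedGroup.mk (braidRels n)
      (FreeGroup.of b * FreeGroup.of a * FreeGroup.of b))) this
  simp only [map_mul, map_inv, one_mul, inv_mul_cancel_right] at h2 ⊢
  exact h2

lemma σ_comm_of {i j : ℕ} (h : i + 2 ≤ j) : Commute (σ n i) (σ n j) := by
  by_cases hi : 1 ≤ i ∧ i ≤ n - 1
  · by_cases hj : 1 ≤ j ∧ j ≤ n - 1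
    · rw [σ, σ, dif_pos hi, dif_pos hj]
      set a : Fin (n-1) := ⟨i - 1, by omega⟩
      set b : Fin (n-1) := ⟨j - 1, by omega⟩
      have hr : (FreeGroup.of a * FreeGroup.of b *
          (FreeGroup.of b * FreeGroup.of a)⁻¹) ∈ braidRels n := by
        right
        exact ⟨a, b, by simp [a, b]; omega, rfl⟩
      have := rel_one hr
      have h2 := congrArg (· * (PresentedGroup.mk (braidRels n)
          (FreeGroup.of b * FreeGroup.of a))) this
      simp only [map_mul, map_inv, one_mul, inv_mul_cancel_right] at h2
      exact h2
    · rw [σ_out hj]; exact Commute.one_right _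
  · rw [σ_out hi]; exact Commute.one_left _

lemma σ_comm {i j : ℕ} (h : i + 2 ≤ j ∨ j + 2 ≤ i) : Commute (σ n i) (σ n j) := by
  rcases h with h | h
  · exact σ_comm_of h
  · exact (σ_comm_of h).symm

end Braid

namespace Braid
variable {m : ℕ}

lemma eB_succ (k : ℕ) : eB m (k+1) = eB m k * (if k % 2 = 0 then σ m k else 1) := by
  unfold eB
  rw [List.range_succ, List.filter_append, List.map_append, List.prod_append]
  congr 1
  by_cases h : k % 2 = 0 <;> simp [h]

lemma oB_succ (k : ℕ) : oB m (k+1) = oB m k * (if k % 2 = 1 then σ m k else 1) := by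
  unfold oB
  rw [List.range_succ, List.filter_append, List.map_append, List.prod_append]
  congr 1
  by_cases h : k % 2 = 1 <;> simp [h]

lemma σ_comm_eB {j k : ℕ} (h : k + 1 ≤ j) : Commute (σ m j) (eB m k) := by
  apply Commute.list_prod_right
  intro y hy
  simp only [List.mem_map, List.mem_filter, List.mem_range] at hy
  obtain ⟨i, ⟨hik, _⟩, rfl⟩ := hy
  exact σ_comm (Or.inr (by omega))

lemma σ_comm_oB {j k : ℕ} (h : k + 1 ≤ j) : Commute (σ m j) (oB m k) := by
  apply Commute.list_prod_right
  intro y hy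
  simp only [List.mem_map, List.mem_filter, List.mem_range] at hy
  obtain ⟨i, ⟨hik, _⟩, rfl⟩ := hy
  exact σ_comm (Or.inr (by omega))

lemma σ_comm_G {j : ℕ} : ∀ k, k + 2 ≤ j → Commute (σ m j) (G m k)
  | 0, _ => Commute.one_right _
  | 1, _ => Commute.one_right _
  | (k+2), h => by
    have h1 : Commute (σ m j) (eB m (k+3)) := σ_comm_eB (by omega)
    have h2 : Commute (σ m j) (oB m (k+2)) := σ_comm_oB (by omega)
    have h3 : Commute (σ m j) (eB m (k+2)) := σ_comm_eB (by omega)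
    have h4 : Commute (σ m j) (oB m (k+3)) := σ_comm_oB (by omega)
    have h5 : Commute (σ m j) (G m k) := σ_comm_G k (by omega)
    show Commute _ (if (k + 2) % 2 = 1 then eB m (k + 3) * oB m (k + 2) * G m k
             else oB m (k + 3) * eB m (k + 2) * G m k)
    split
    · exact ((h1.mul_right h2).mul_right h5)
    · exact ((h4.mul_right h3).mul_right h5)

lemma BI : ∀ k, ((k+2) % 2 = 1 → eB m (k+2) * oB m (k+2) * G m k = G m k * W m (k+2)) ∧
    ((k+2) % 2 = 0 → oB m (k+2) * eB m (k+2) * G m k = G m k * W m (k+2))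
  | 0 => by
    constructor
    · omega
    · intro _
      show oB m 2 * eB m 2 * G m 0 = G m 0 * W m 2
      simp [oB, eB, G, W, List.range_succ, σ_out (by omega : ¬(1 ≤ 0 ∧ 0 ≤ m - 1))]
  | 1 => by
    constructor
    · intro _
      show eB m 3 * oB m 3 * G m 1 = G m 1 * W m 3
      simp [oB, eB, G, W, List.range_succ, σ_out (by omega : ¬(1 ≤ 0 ∧ 0 ≤ m - 1)), mul_assoc]
    · omega
  | (k+2) => by
    have IH := BI k
    set n := k + 2 with hn
    have hW : W m (n+2) = σ m (n+1) * (σ m n * W m n) := rfl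
    have c1 : Commute (σ m (n+1)) (G m k) := σ_comm_G k (by omega)
    have c2 : Commute (σ m n) (G m k) := σ_comm_G k (by omega)
    rcases Nat.even_or_odd n with he | ho
    · -- n even
      have hne : n % 2 = 0 := Nat.even_iff.mp he
      constructor
      · omega
      intro _
      have hGn : G m n = oB m (n+1) * eB m n * G m k := by
        show G m (k+2) = _
        rw [G]; simp [hn, hne, show k % 2 = 0 by omega]
      have hoB1 : oB m (n+1) = oB m n := by rw [oB_succ, if_neg (by omega), mul_one]
      have hoB2 : oB m (n+2) = oB m n * σ m (n+1) := by
        rw [show n + 2 = (n+1)+1 from rfl, oB_succ, if_pos (by omega), hoB1]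
      have heB2 : eB m (n+2) = eB m n * σ m n := by
        rw [show n + 2 = (n+1)+1 from rfl, eB_succ, if_neg (by omega), mul_one,
          eB_succ, if_pos (by omega)]
      have hIH : oB m n * (eB m n * G m k) = G m k * W m n := by
        rw [← mul_assoc]; exact IH.2 (by omega)
      have c3 : Commute (σ m (n+1)) (eB m n) := σ_comm_eB (by omega)
      rw [hoB2, heB2, hGn, hoB1, hW]
      simp only [mul_assoc]
      rw [c3.left_comm, hIH, c2.left_comm, c1.left_comm]
    · -- n odd
      have hno : n % 2 = 1 := Nat.odd_iff.mp ho
      constructor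
      swap
      · omega
      intro _
      have hGn : G m n = eB m n * oB m n * G m k := by
        show G m (k+2) = _
        rw [G]
        have heB1 : eB m (n+1) = eB m n := by rw [eB_succ, if_neg (by omega), mul_one]
        simp only [if_pos (show (k+2) % 2 = 1 by omega)]
        rw [show k + 3 = n + 1 from by omega, heB1, hn]
      have hoB2 : oB m (n+2) = oB m n * σ m n := by
        rw [show n + 2 = (n+1)+1 from rfl, oB_succ, if_neg (by omega), mul_one,
          oB_succ, if_pos (by omega)]
      have heB2 : eB m (n+2) = eB m n * σ m (n+1) := by
        rw [show n + 2 = (n+1)+1 from rfl, eB_succ, if_pos (by omega),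
          eB_succ, if_neg (by omega), mul_one]
      have hIH : eB m n * (oB m n * G m k) = G m k * W m n := by
        rw [← mul_assoc]; exact IH.1 (by omega)
      have c4 : Commute (σ m (n+1)) (oB m n) := σ_comm_oB (by omega)
      rw [heB2, hoB2, hGn, hW]
      simp only [mul_assoc]
      rw [c4.left_comm, hIH, c2.left_comm, c1.left_comm]

end Braid

namespace Braid
variable {m : ℕ}

/-- `T m k l = σ_{k-1} σ_{k-2} ⋯ σ_l` (and `1` if `l > k-1`). -/
def T (m : ℕ) : ℕ → ℕ → BraidGroup m
  | 0, _ => 1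
  | (k+1), l => if l ≤ k then σ m k * T m k l else 1

lemma T_self : ∀ k, T m k k = 1
  | 0 => rfl
  | (k+1) => by rw [T, if_neg (by omega)]

lemma W_eq_T : ∀ k, W m k = T m k 1
  | 0 => rfl
  | 1 => by
    rw [W, W, T, if_neg (by omega), σ_out (by omega : ¬ (1 ≤ 0 ∧ 0 ≤ m - 1)), one_mul]
  | (k+2) => by
    rw [W, T, if_pos (by omega), W_eq_T (k+1)]

lemma T_split : ∀ k l l', l ≤ l' → l' ≤ k → T m k l = T m k l' * T m l' l
  | 0, l, l', h1, h2 => by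
    have : l' = 0 := by omega
    subst this
    have : l = 0 := by omega
    subst this
    rw [T_self]; exact (one_mul _).symm
  | (k+1), l, l', h1, h2 => by
    rcases Nat.eq_or_lt_of_le h2 with he | hlt
    · subst he
      rw [T_self, one_mul]
    · have hk : l' ≤ k := by omega
      rw [T, T, if_pos (by omega), if_pos hk, T_split k l l' h1 hk, mul_assoc]

lemma T_pop : ∀ k l, l + 1 ≤ k → T m k l = T m k (l+1) * σ m l
  | 0, l, h => by omega
  | (k+1), l, h => by
    rcases Nat.eq_or_lt_of_le h with he | hlt
    · have : l = k := by omega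
      subst this
      rw [T, if_pos (le_refl _), T, if_neg (by omega), T_self, one_mul, mul_one]
    · rw [T, if_pos (by omega), T, if_pos (by omega), T_pop k l (by omega), mul_assoc]

lemma σ_comm_T {u : ℕ} : ∀ k l, u + 2 ≤ l → Commute (G m u) (T m k l)
  | 0, l, h => Commute.one_right _
  | (k+1), l, h => by
    rw [T]
    split
    · exact ((σ_comm_G u (by omega)).symm.mul_right (σ_comm_T k l h))
    · exact Commute.one_right _

/-- partial parity product over `[l, l+len)`. -/
def pP (m l len p : ℕ) : BraidGroup m :=
  (((List.range' l len).filter (fun i => i % 2 = p)).map (σ m)).prod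

lemma range_split (a : ℕ) (h : a ≤ m) :
    List.range m = List.range a ++ List.range' a (m - a) := by
  have h2 := List.range'_append_1 (s := 0) (m := a) (n := m - a)
  rw [Nat.zero_add, show a + (m - a) = m by omega] at h2
  rw [List.range_eq_range', List.range_eq_range', h2]

lemma eB_split (a : ℕ) (h : a ≤ m) : eB m m = eB m a * pP m a (m - a) 0 := by
  unfold eB pP
  rw [← List.prod_append, ← List.map_append, ← List.filter_append, ← range_split a h]

lemma oB_split (a : ℕ) (h : a ≤ m) : oB m m = oB m a * pP m a (m - a) 1 := by
  unfold oB pP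
  rw [← List.prod_append, ← List.map_append, ← List.filter_append, ← range_split a h]

lemma σ_comm_pP {j l len p : ℕ} (h : j + 2 ≤ l) : Commute (σ m j) (pP m l len p) := by
  apply Commute.list_prod_right
  intro y hy
  simp only [List.mem_map, List.mem_filter] at hy
  obtain ⟨i, ⟨hil, _⟩, rfl⟩ := hy
  have := List.mem_range'.mp hil
  obtain ⟨t, ht, rfl⟩ := this
  exact σ_comm (Or.inl (by omega))

lemma oB_comm_pP {a len p : ℕ} (ha : a % 2 = 1) : Commute (oB m a) (pP m a len p) := by
  apply Commute.list_prod_left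
  intro y hy
  simp only [List.mem_map, List.mem_filter, List.mem_range, decide_eq_true_eq] at hy
  obtain ⟨i, ⟨hik, hp⟩, rfl⟩ := hy
  exact σ_comm_pP (by omega)

lemma eB_comm_pP {a len p : ℕ} (ha : a % 2 = 0) : Commute (eB m a) (pP m a len p) := by
  apply Commute.list_prod_left
  intro y hy
  simp only [List.mem_map, List.mem_filter, List.mem_range, decide_eq_true_eq] at hy
  obtain ⟨i, ⟨hik, hp⟩, rfl⟩ := hy
  exact σ_comm_pP (by omega)

/-- generators with indices in `[l, u]`. -/
def Sset (m l u : ℕ) : Set (BraidGroup m) := {x | ∃ i, l ≤ i ∧ i ≤ u ∧ x = σ m i}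

lemma eB_mem (k u : ℕ) (h : k ≤ u + 1) : eB m k ∈ Subgroup.closure (Sset m 1 u) := by
  apply list_prod_mem
  intro y hy
  simp only [List.mem_map, List.mem_filter, List.mem_range, decide_eq_true_eq] at hy
  obtain ⟨i, ⟨hik, _⟩, rfl⟩ := hy
  rcases Nat.eq_zero_or_pos i with h0 | h0
  · subst h0
    rw [σ_out (by omega : ¬ (1 ≤ 0 ∧ 0 ≤ m - 1))]
    exact one_mem _
  · exact Subgroup.subset_closure ⟨i, h0, by omega, rfl⟩

lemma oB_mem (k u : ℕ) (h : k ≤ u + 1) : oB m k ∈ Subgroup.closure (Sset m 1 u) := by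
  apply list_prod_mem
  intro y hy
  simp only [List.mem_map, List.mem_filter, List.mem_range, decide_eq_true_eq] at hy
  obtain ⟨i, ⟨hik, _⟩, rfl⟩ := hy
  rcases Nat.eq_zero_or_pos i with h0 | h0
  · subst h0
    rw [σ_out (by omega : ¬ (1 ≤ 0 ∧ 0 ≤ m - 1))]
    exact one_mem _
  · exact Subgroup.subset_closure ⟨i, h0, by omega, rfl⟩

lemma G_mem : ∀ k, G m k ∈ Subgroup.closure (Sset m 1 k)
  | 0 => one_mem _
  | 1 => one_mem _
  | (k+2) => by
    have hmono : Subgroup.closure (Sset m 1 k) ≤ Subgroup.closure (Sset m 1 (k+2)) := by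
      apply Subgroup.closure_mono
      rintro x ⟨i, h1, h2, rfl⟩
      exact ⟨i, h1, by omega, rfl⟩
    have h1 := eB_mem (m := m) (k+3) (k+2) (by omega)
    have h2 := oB_mem (m := m) (k+2) (k+2) (by omega)
    have h3 := eB_mem (m := m) (k+2) (k+2) (by omega)
    have h4 := oB_mem (m := m) (k+3) (k+2) (by omega)
    have h5 := hmono (G_mem k)
    show (if (k + 2) % 2 = 1 then eB m (k + 3) * oB m (k + 2) * G m k
             else oB m (k + 3) * eB m (k + 2) * G m k) ∈ _
    split
    · exact mul_mem (mul_mem h1 h2) h5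
    · exact mul_mem (mul_mem h4 h3) h5

lemma commute_of_mem_closure {A : Set (BraidGroup m)} {x y : BraidGroup m}
    (hx : x ∈ Subgroup.closure A) (h : ∀ a ∈ A, Commute a y) : Commute x y := by
  induction hx using Subgroup.closure_induction with
  | mem a ha => exact h a ha
  | one => exact Commute.one_left _
  | mul a b _ _ ha hb => exact ha.mul_left hb
  | inv a _ ha => exact ha.inv_left

end Braid

namespace Braid

section Rho
variable {m : ℕ} {ρ : BraidGroup m → BraidGroup m}
  (hmul : ∀ x y, ρ (x * y) = ρ y * ρ x) (hone : ρ 1 = 1)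
  (hσ : ∀ i, 1 ≤ i → i ≤ m - 1 → ρ (σ m i) = σ m (m - i))

include hmul hone in
lemma ρ_inv (x : BraidGroup m) : ρ x⁻¹ = (ρ x)⁻¹ := by
  have h := hmul x⁻¹ x
  rw [inv_mul_cancel, hone] at h
  exact eq_inv_of_mul_eq_one_right h.symm

include hone hσ in
lemma ρ_σ (hm : 1 ≤ m) {i : ℕ} (h : i ≤ m - 1) : ρ (σ m i) = σ m (m - i) := by
  rcases Nat.eq_zero_or_pos i with h0 | h0
  · subst h0
    rw [σ_out (by omega : ¬ (1 ≤ 0 ∧ 0 ≤ m - 1)), hone, Nat.sub_zero,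
      σ_out (by omega : ¬ (1 ≤ m ∧ m ≤ m - 1))]
  · exact hσ i h0 h

include hmul hone hσ in
lemma ρ_W (hm : 1 ≤ m) : ∀ j, j ≤ m - 1 → ρ (W m (j+1)) = T m m (m - j)
  | 0, _ => by
    have h1 : W m 1 = 1 := by
      rw [W, W, σ_out (by omega : ¬ (1 ≤ 0 ∧ 0 ≤ m - 1)), one_mul]
    rw [h1, hone, Nat.sub_zero, T_self]
  | (j+1), hj => by
    have h1 : W m (j+1+1) = σ m (j+1) * W m (j+1) := rfl
    rw [h1, hmul, ρ_W hm j (by omega), hσ (j+1) (by omega) hj]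
    rw [T_pop m (m - (j+1)) (by omega), show m - (j+1) + 1 = m - j by omega]

include hmul hone hσ in
lemma ρ_eB (hm : 1 ≤ m) : ∀ k, k ≤ m - 1 → ρ (eB m k) = pP m (m - k + 1) k (m % 2)
  | 0, _ => by
    have : eB m 0 = 1 := rfl
    rw [this, hone]; rfl
  | (k+1), hk => by
    rw [eB_succ, hmul, ρ_eB hm k (by omega)]
    have hr : pP m (m - (k+1) + 1) (k+1) (m % 2)
        = (if (m - k) % 2 = m % 2 then σ m (m - k) else 1) * pP m (m - k + 1) k (m % 2) := by
      unfold pP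
      rw [show m - (k+1) + 1 = m - k by omega, List.range'_succ, List.filter_cons,
        show m - k + 1 = m - k + 1 from rfl]
      by_cases hpar : (m - k) % 2 = m % 2
      · rw [if_pos (by simpa using hpar), if_pos hpar, List.map_cons, List.prod_cons]
      · rw [if_neg (by simpa using hpar), if_neg hpar, one_mul]
    rw [hr]
    congr 1
    by_cases hp : k % 2 = 0
    · rw [if_pos hp, if_pos (by omega), ρ_σ hone hσ hm (by omega : k ≤ m - 1)]
    · rw [if_neg hp, if_neg (by omega), hone]

include hmul hone hσ in
lemma ρ_oB (hm : 1 ≤ m) : ∀ k, k ≤ m - 1 → ρ (oB m k) = pP m (m - k + 1) k ((m+1) % 2)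
  | 0, _ => by
    have : oB m 0 = 1 := rfl
    rw [this, hone]; rfl
  | (k+1), hk => by
    rw [oB_succ, hmul, ρ_oB hm k (by omega)]
    have hr : pP m (m - (k+1) + 1) (k+1) ((m+1) % 2)
        = (if (m - k) % 2 = (m+1) % 2 then σ m (m - k) else 1)
            * pP m (m - k + 1) k ((m+1) % 2) := by
      unfold pP
      rw [show m - (k+1) + 1 = m - k by omega, List.range'_succ, List.filter_cons]
      by_cases hpar : (m - k) % 2 = (m+1) % 2
      · rw [if_pos (by simpa using hpar), if_pos hpar, List.map_cons, List.prod_cons]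
      · rw [if_neg (by simpa using hpar), if_neg hpar, one_mul]
    rw [hr]
    congr 1
    by_cases hp : k % 2 = 1
    · rw [if_pos hp, if_pos (by omega), ρ_σ hone hσ hm (by omega : k ≤ m - 1)]
    · rw [if_neg hp, if_neg (by omega), hone]

lemma pP_pop (hm : 1 ≤ m) {l len p : ℕ} (h : l + len = m) :
    pP m l (len + 1) p = pP m l len p := by
  unfold pP
  rw [List.range'_concat, List.filter_append, List.map_append, List.prod_append]
  have h1 : l + 1 * len = m := by omega
  rw [h1]
  by_cases hpar : m % 2 = p
  · rw [show List.filter (fun i => decide (i % 2 = p)) [m] = [m] by simp [hpar]]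
    simp [σ_out (by omega : ¬ (1 ≤ m ∧ m ≤ m - 1))]
  · rw [show List.filter (fun i => decide (i % 2 = p)) [m] = [] by simp [hpar]]
    simp

include hmul hone hσ in
lemma ρ_mem_closure {u : ℕ} (hu : u ≤ m - 1) (hm : 1 ≤ m) {x : BraidGroup m}
    (hx : x ∈ Subgroup.closure (Sset m 1 u)) :
    ρ x ∈ Subgroup.closure (Sset m (m - u) m) := by
  induction hx using Subgroup.closure_induction with
  | mem a ha =>
    obtain ⟨i, h1, h2, rfl⟩ := ha
    rw [hσ i h1 (le_trans h2 hu)]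
    exact Subgroup.subset_closure ⟨m - i, by omega, by omega, rfl⟩
  | one => rw [hone]; exact one_mem _
  | mul a b _ _ ha hb => rw [hmul]; exact mul_mem hb ha
  | inv a _ ha => rw [ρ_inv hmul hone]; exact inv_mem ha

end Rho
end Braid


open Braid

/-- For `2 ≤ a₁ < a₂`, with `H(a₁,a₂) := ρ(G(a₂ - a₁ - 1))` and
`Ω(a₁,a₂) := H(a₁,a₂)⁻¹ G(a₁ - 2)` in `B_{a₂}`: if `a₁` is odd then
`Ω⁻¹ e(a₂) o(a₂) Ω = W(a₁) W(a₂) W(a₁)⁻¹`, and if `a₁` is even then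
`Ω⁻¹ o(a₂) e(a₂) Ω = W(a₁) W(a₂) W(a₁)⁻¹`. -/
theorem conj_eo_high_by_Omega (a₁ a₂ : ℕ) (h1 : 2 ≤ a₁) (h12 : a₁ < a₂)
    (ρ : BraidGroup a₂ → BraidGroup a₂)
    (hmul : ∀ x y, ρ (x * y) = ρ y * ρ x) (hone : ρ 1 = 1)
    (hσ : ∀ i, 1 ≤ i → i ≤ a₂ - 1 → ρ (σ a₂ i) = σ a₂ (a₂ - i)) :
    (Odd a₁ →
      ((ρ (G a₂ (a₂ - a₁ - 1)))⁻¹ * G a₂ (a₁ - 2))⁻¹ * (eB a₂ a₂ * oB a₂ a₂) *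
        ((ρ (G a₂ (a₂ - a₁ - 1)))⁻¹ * G a₂ (a₁ - 2)) =
        W a₂ a₁ * W a₂ a₂ * (W a₂ a₁)⁻¹) ∧
    (Even a₁ →
      ((ρ (G a₂ (a₂ - a₁ - 1)))⁻¹ * G a₂ (a₁ - 2))⁻¹ * (oB a₂ a₂ * eB a₂ a₂) *
        ((ρ (G a₂ (a₂ - a₁ - 1)))⁻¹ * G a₂ (a₁ - 2)) =
        W a₂ a₁ * W a₂ a₂ * (W a₂ a₁)⁻¹) := by
  have hm1 : 1 ≤ a₂ := by omega
  set r := a₂ - a₁ with hrdef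
  have hr1 : 1 ≤ r := by omega
  set Hh := ρ (G a₂ (r - 1)) with hHdef
  set Gl := G a₂ (a₁ - 2) with hGldef
  set V := T a₂ a₂ a₁ with hVdef
  set Ea := eB a₂ a₁ with hEadef
  set Oa := oB a₂ a₁ with hOadef
  set Eu := pP a₂ a₁ r 0 with hEudef
  set Ou := pP a₂ a₁ r 1 with hOudef
  have hρW : ρ (W a₂ (r+1)) = V := by
    rw [ρ_W hmul hone hσ hm1 r (by omega), show a₂ - r = a₁ by omega]
  have hρE : ρ (eB a₂ (r+1)) = pP a₂ a₁ r (a₂ % 2) := by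
    rw [ρ_eB hmul hone hσ hm1 (r+1) (by omega), show a₂ - (r+1) + 1 = a₁ by omega,
      pP_pop hm1 (by omega)]
  have hρO : ρ (oB a₂ (r+1)) = pP a₂ a₁ r ((a₂+1) % 2) := by
    rw [ρ_oB hmul hone hσ hm1 (r+1) (by omega), show a₂ - (r+1) + 1 = a₁ by omega,
      pP_pop hm1 (by omega)]
  -- upper conjugation identities
  have hs4o : a₁ % 2 = 1 → Hh * (Eu * Ou) = V * Hh := by
    intro ha1
    rcases Nat.even_or_odd a₂ with hA | hA
    · have h2 : a₂ % 2 = 0 := Nat.even_iff.mp hA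
      have hBI := (BI (r-1) (m := a₂)).2 (by omega)
      rw [show r - 1 + 2 = r + 1 by omega] at hBI
      have hρBI := congrArg ρ hBI
      simp only [hmul] at hρBI
      rw [hρE, hρO, hρW, h2, show (a₂ + 1) % 2 = 1 by omega] at hρBI
      exact hρBI
    · have h2 : a₂ % 2 = 1 := Nat.odd_iff.mp hA
      have hBI := (BI (r-1) (m := a₂)).1 (by omega)
      rw [show r - 1 + 2 = r + 1 by omega] at hBI
      have hρBI := congrArg ρ hBI
      simp only [hmul] at hρBI
      rw [hρE, hρO, hρW, h2, show (a₂ + 1) % 2 = 0 by omega] at hρBI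
      exact hρBI
  have hs4e : a₁ % 2 = 0 → Hh * (Ou * Eu) = V * Hh := by
    intro ha1
    rcases Nat.even_or_odd a₂ with hA | hA
    · have h2 : a₂ % 2 = 0 := Nat.even_iff.mp hA
      have hBI := (BI (r-1) (m := a₂)).1 (by omega)
      rw [show r - 1 + 2 = r + 1 by omega] at hBI
      have hρBI := congrArg ρ hBI
      simp only [hmul] at hρBI
      rw [hρE, hρO, hρW, h2, show (a₂ + 1) % 2 = 1 by omega] at hρBI
      exact hρBI
    · have h2 : a₂ % 2 = 1 := Nat.odd_iff.mp hA
      have hBI := (BI (r-1) (m := a₂)).2 (by omega)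
      rw [show r - 1 + 2 = r + 1 by omega] at hBI
      have hρBI := congrArg ρ hBI
      simp only [hmul] at hρBI
      rw [hρE, hρO, hρW, h2, show (a₂ + 1) % 2 = 0 by omega] at hρBI
      exact hρBI
  -- support commutation
  have hmemH : Hh ∈ Subgroup.closure (Sset a₂ (a₁+1) a₂) := by
    have hmem := ρ_mem_closure hmul hone hσ (show r - 1 ≤ a₂ - 1 by omega) hm1
      (G_mem (m := a₂) (r-1))
    rw [show a₂ - (r-1) = a₁ + 1 by omega] at hmem
    exact hmem
  have hHEa : Commute Hh Ea := by
    refine commute_of_mem_closure hmemH ?_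
    rintro a ⟨j, hj1, hj2, rfl⟩
    exact σ_comm_eB (by omega)
  have hHOa : Commute Hh Oa := by
    refine commute_of_mem_closure hmemH ?_
    rintro a ⟨j, hj1, hj2, rfl⟩
    exact σ_comm_oB (by omega)
  have hGV : Commute Gl V := σ_comm_T a₂ a₁ (by omega)
  have hWm : W a₂ a₂ = V * W a₂ a₁ := by
    rw [W_eq_T a₂, W_eq_T a₁, T_split a₂ 1 a₁ (by omega) (by omega)]
  have hsplitE : eB a₂ a₂ = Ea * Eu := by
    rw [hEadef, hEudef, hrdef]; exact eB_split a₁ (by omega)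
  have hsplitO : oB a₂ a₂ = Oa * Ou := by
    rw [hOadef, hOudef, hrdef]; exact oB_split a₁ (by omega)
  constructor
  · intro hodd
    have ha1 : a₁ % 2 = 1 := Nat.odd_iff.mp hodd
    have hs3 : Ea * Oa * Gl = Gl * W a₂ a₁ := by
      have h := (BI (a₁-2) (m := a₂)).1 (by omega)
      rw [show a₁ - 2 + 2 = a₁ by omega] at h
      exact h
    have hc2 : Commute Oa Eu := oB_comm_pP ha1
    have key : Hh * (eB a₂ a₂ * oB a₂ a₂) * Hh⁻¹ = Ea * Oa * V := by
      rw [hsplitE, hsplitO]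
      have e1 : Ea * Eu * (Oa * Ou) = Ea * (Oa * (Eu * Ou)) := by
        rw [mul_assoc Ea Eu, ← mul_assoc Eu Oa, ← hc2.eq, mul_assoc Oa Eu]
      rw [e1, hHEa.left_comm, hHOa.left_comm, hs4o ha1]
      group
    calc (Hh⁻¹ * Gl)⁻¹ * (eB a₂ a₂ * oB a₂ a₂) * (Hh⁻¹ * Gl)
        = Gl⁻¹ * (Hh * (eB a₂ a₂ * oB a₂ a₂) * Hh⁻¹) * Gl := by group
      _ = Gl⁻¹ * (Ea * Oa * V) * Gl := by rw [key]
      _ = Gl⁻¹ * (Ea * Oa) * (V * Gl) := by group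
      _ = Gl⁻¹ * (Ea * Oa) * (Gl * V) := by rw [hGV.symm.eq]
      _ = Gl⁻¹ * (Ea * Oa * Gl) * V := by group
      _ = Gl⁻¹ * (Gl * W a₂ a₁) * V := by rw [hs3]
      _ = W a₂ a₁ * V := by group
      _ = W a₂ a₁ * W a₂ a₂ * (W a₂ a₁)⁻¹ := by rw [hWm]; group
  · intro heven
    have ha1 : a₁ % 2 = 0 := Nat.even_iff.mp heven
    have hs3 : Oa * Ea * Gl = Gl * W a₂ a₁ := by
      have h := (BI (a₁-2) (m := a₂)).2 (by omega)
      rw [show a₁ - 2 + 2 = a₁ by omega] at h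
      exact h
    have hc2 : Commute Ea Ou := eB_comm_pP ha1
    have key : Hh * (oB a₂ a₂ * eB a₂ a₂) * Hh⁻¹ = Oa * Ea * V := by
      rw [hsplitE, hsplitO]
      have e1 : Oa * Ou * (Ea * Eu) = Oa * (Ea * (Ou * Eu)) := by
        rw [mul_assoc Oa Ou, ← mul_assoc Ou Ea, ← hc2.eq, mul_assoc Ea Ou]
      rw [e1, hHOa.left_comm, hHEa.left_comm, hs4e ha1]
      group
    calc (Hh⁻¹ * Gl)⁻¹ * (oB a₂ a₂ * eB a₂ a₂) * (Hh⁻¹ * Gl)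
        = Gl⁻¹ * (Hh * (oB a₂ a₂ * eB a₂ a₂) * Hh⁻¹) * Gl := by group
      _ = Gl⁻¹ * (Oa * Ea * V) * Gl := by rw [key]
      _ = Gl⁻¹ * (Oa * Ea) * (V * Gl) := by group
      _ = Gl⁻¹ * (Oa * Ea) * (Gl * V) := by rw [hGV.symm.eq]
      _ = Gl⁻¹ * (Oa * Ea * Gl) * V := by group
      _ = Gl⁻¹ * (Gl * W a₂ a₁) * V := by rw [hs3]
      _ = W a₂ a₁ * V := by group
      _ = W a₂ a₁ * W a₂ a₂ * (W a₂ a₁)⁻¹ := by rw [hWm]; group
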